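/- For every u ∈ S^d with u ≠ (4), the successor s(u) of u in the lexicographic order ⪯ on S^d satisfies |l(u) − l(s(u))| ≤ 1, where l denotes the length of the tuple. -/

import Mathlib

open SimpleGraph

/-- Sorted list of the tuple set `S^d`: tuples with entries in {1,3} except
the last entry which is in {1,2,3,4}, of length between 1 and `d`,
listed in lexicographic order. -/
def Tl : ℕ → List (List ℕ)
  | 0 => []
  | k+1 => [[1]] ++ (Tl k).map (fun a => 1 :: a) ++ [[2], [3]]
            ++ (Tl k).map (fun a => 3 :: a) ++ [[4]]

/-- Strict lexicographic order on tuples (a proper prefix is smaller). -/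
def lexLt (a b : List ℕ) : Prop := List.Lex (· < ·) a b

def lexLe (a b : List ℕ) : Prop := a = b ∨ lexLt a b

/-- `v` is the successor of `u` in the lexicographic order on `S^d`. -/
def IsSucc (d : ℕ) (u v : List ℕ) : Prop :=
  v ∈ Tl d ∧ lexLt u v ∧ ∀ w ∈ Tl d, lexLt u w → lexLe v w

/-- The interval `[a,b]` in `S^d`. -/
def interval (d : ℕ) (a b : List ℕ) : Set (List ℕ) :=
  {c | c ∈ Tl d ∧ lexLe a c ∧ lexLe c b}

/-- `[a,b]` is a proper interval: no interior element has length `l(a)` or `l(b)`. -/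
def ProperInterval (d : ℕ) (a b : List ℕ) : Prop :=
  a ∈ Tl d ∧ b ∈ Tl d ∧ lexLe a b ∧
  ∀ c ∈ interval d a b, c ≠ a → c ≠ b →
    c.length ≠ a.length ∧ c.length ≠ b.length

/-- The set of left endpoints of flat steps of the interval `[a,b]`. -/
def flatSteps (d : ℕ) (a b : List ℕ) : Set (List ℕ) :=
  {c | c ∈ Tl d ∧ lexLe a c ∧ lexLt c b ∧ ∃ v, IsSucc d c v ∧ v.length = c.length}

/-- Vertices of `G_d`: elements of `S^d`, subdivision vertices, and centers. -/
inductive Vtx where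
  | elt : List ℕ → Vtx
  | sub : ℕ → Fin 2 → Vtx
  | ctr : ℕ → Vtx
deriving DecidableEq

/-- The path `P_d` as a list of vertices: the elements of `S^d` in order,
with two subdivision vertices between consecutive elements of equal length
and one otherwise. -/
def pathList (d : ℕ) : List Vtx :=
  ((Tl d).zipIdx.map (fun q => (q.2, q.1))).flatMap (fun p =>
    Vtx.elt p.2 :: (match (Tl d)[p.1 + 1]? with
      | none => []
      | some b =>
        if p.2.length = b.length then [Vtx.sub p.1 0, Vtx.sub p.1 1]
        else [Vtx.sub p.1 0]))

/-- `x` and `y` are consecutive in the list `l`. -/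
def ChainAdj {α : Type} (l : List α) (x y : α) : Prop :=
  ∃ i, (l[i]? = some x ∧ l[i+1]? = some y) ∨
       (l[i]? = some y ∧ l[i+1]? = some x)

/-- Adjacency from a center vertex. -/
def ctrAdj (d : ℕ) : Vtx → Vtx → Prop
  | Vtx.ctr k, Vtx.ctr m => k ≠ m ∧ 1 ≤ k ∧ k ≤ d ∧ 1 ≤ m ∧ m ≤ d
  | Vtx.ctr k, Vtx.elt a => 1 ≤ k ∧ k ≤ d ∧ a ∈ Tl d ∧ a.length = k
  | _, _ => False

/-- The vertex set of `G_d`. -/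
def VSet (d : ℕ) : Finset Vtx :=
  (pathList d).toFinset ∪ (Finset.Icc 1 d).image Vtx.ctr

def GdAdj (d : ℕ) (x y : Vtx) : Prop :=
  x ≠ y ∧ (ChainAdj (pathList d) x y ∨ ctrAdj d x y ∨ ctrAdj d y x)

/-- The graph `G_d`. -/
def Gd (d : ℕ) : SimpleGraph {x // x ∈ VSet d} where
  Adj x y := GdAdj d x.1 y.1
  symm := by
    constructor
    rintro x y ⟨hne, h⟩
    refine ⟨hne.symm, ?_⟩
    rcases h with ⟨i, hi⟩ | h | h
    · exact Or.inl ⟨i, hi.symm⟩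
    · exact Or.inr (Or.inr h)
    · exact Or.inr (Or.inl h)
  loopless := ⟨fun x h => h.1 rfl⟩

/-- A rank decomposition of a graph `G`: a finite cubic tree together with a
bijection from the vertices of `G` to the leaves of the tree. -/
structure RankDecomp {V : Type} [Fintype V] (G : SimpleGraph V) where
  t : Type
  fin : Fintype t
  tree : SimpleGraph t
  conn : tree.Connected
  acyc : tree.IsAcyclic
  two_le : 2 ≤ Nat.card t
  cubic : ∀ v : t, (tree.neighborSet v).ncard = 1 ∨ (tree.neighborSet v).ncard = 3
  leafEquiv : V ≃ {v : t // (tree.neighborSet v).ncard = 1}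

/-- The set of vertices of `G` whose leaf lies on the side of `a` of
the edge `ab` of the decomposition tree. -/
def RankDecomp.side {V : Type} [Fintype V] {G : SimpleGraph V}
    (D : RankDecomp G) (a b : D.t) : Set V :=
  {x | (D.tree.deleteEdges {s(a, b)}).Reachable (D.leafEquiv x).1 a}

/-- The cutrank function of `G`: the GF(2)-rank of the adjacency submatrix
between `X` and its complement. -/
noncomputable def cutRank {V : Type} [Fintype V] (G : SimpleGraph V) (X : Set V) : ℕ :=
  haveI : Fintype ↥X := Fintype.ofFinite _
  haveI : Fintype ↥(Xᶜ) := Fintype.ofFinite _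
  haveI : DecidableRel G.Adj := Classical.decRel _
  Matrix.rank (Matrix.of (fun (x : ↥X) (y : ↥(Xᶜ)) =>
    if G.Adj x.1 y.1 then (1 : ZMod 2) else 0))

/-- The decomposition `D` has width at most `k`. -/
def RankDecomp.WidthLE {V : Type} [Fintype V] {G : SimpleGraph V}
    (D : RankDecomp G) (k : ℕ) : Prop :=
  ∀ a b : D.t, D.tree.Adj a b → cutRank G (D.side a b) ≤ k

/-- The rank-width of `G`. -/
noncomputable def rankwidth {V : Type} [Fintype V] (G : SimpleGraph V) : ℕ :=
  sInf {k | ∃ D : RankDecomp G, D.WidthLE k}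

/-- `l` is an induced path in `G`: its vertices are distinct and two of them
are adjacent in `G` iff they are consecutive on `l`. -/
def IsInducedPathList {V : Type} (G : SimpleGraph V) (l : List V) : Prop :=
  l.Nodup ∧ ∀ x ∈ l, ∀ y ∈ l, (G.Adj x y ↔ ChainAdj l x y)

/-- The diamond: the complete graph on four vertices minus an edge. -/
def diamond : SimpleGraph (Fin 4) := (⊤ : SimpleGraph (Fin 4)).deleteEdges {s(2, 3)}

def PP (a b : List ℕ) : Prop :=
  lexLt a b ∧ a.length ≤ b.length + 1 ∧ b.length ≤ a.length + 1

lemma PP_cons {c : ℕ} {a b : List ℕ} (h : PP a b) : PP (c :: a) (c :: b) :=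
  ⟨List.Lex.cons h.1, by simpa using h.2.1, by simpa using h.2.2⟩

lemma PP_dec {a b : List ℕ} (h1 : List.Lex (· < ·) a b)
    (h2 : a.length ≤ b.length + 1) (h3 : b.length ≤ a.length + 1) : PP a b :=
  ⟨h1, h2, h3⟩

lemma Tl_key : ∀ d, List.Chain' PP (Tl d) ∧
    (Tl d = [] ∨ ∃ m, Tl d = ([1] :: m) ++ [[4]]) := by
  intro d
  induction d with
  | zero => exact ⟨List.isChain_nil, Or.inl rfl⟩
  | succ k ih =>
    obtain ⟨hch, hrep⟩ := ih
    constructor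
    · rcases hrep with h0 | ⟨m, hm⟩
      · rw [show Tl (k+1) = [[1],[2],[3],[4]] by simp [Tl, h0]]
        refine List.isChain_cons_cons.mpr ⟨?_, List.isChain_cons_cons.mpr ⟨?_,
          List.isChain_cons_cons.mpr ⟨?_, List.isChain_singleton _⟩⟩⟩ <;>
          exact PP_dec (by decide) (by decide) (by decide)
      · have hH : (Tl k).head? = some [1] := by rw [hm]; rfl
        have hL : (Tl k).getLast? = some [4] := by
          rw [hm, show ([1] :: m) ++ [[4]] = ([1] :: m) ++ [[4]] from rfl,
            List.getLast?_concat]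
        have hB : List.Chain' PP ((Tl k).map (fun a => 1 :: a)) :=
          (List.isChain_map _).mpr (hch.imp fun a b h => PP_cons h)
        have hD : List.Chain' PP ((Tl k).map (fun a => 3 :: a)) :=
          (List.isChain_map _).mpr (hch.imp fun a b h => PP_cons h)
        have c1 : List.Chain' PP ([[1]] ++ (Tl k).map (fun a => 1 :: a)) := by
          refine (List.isChain_singleton _).append hB ?_
          intro x hx y hy
          rw [List.head?_map, hH] at hy
          simp at hx hy
          subst hx; subst hy
          exact PP_dec (by decide) (by decide) (by decide)
        have c2 : List.Chain' PP ([[1]] ++ (Tl k).map (fun a => 1 :: a) ++ [[2],[3]]) := by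
          refine c1.append (List.isChain_cons_cons.mpr
            ⟨PP_dec (by decide) (by decide) (by decide), List.isChain_singleton _⟩) ?_
          intro x hx y hy
          rw [List.getLast?_append, List.getLast?_map, hL] at hx
          simp at hx hy
          subst hx; subst hy
          exact PP_dec (by decide) (by decide) (by decide)
        have c3 : List.Chain' PP ([[1]] ++ (Tl k).map (fun a => 1 :: a) ++ [[2],[3]]
            ++ (Tl k).map (fun a => 3 :: a)) := by
          refine c2.append hD ?_
          intro x hx y hy
          rw [List.getLast?_append] at hx
          rw [List.head?_map, hH] at hy
          simp at hx hy
          subst hx; subst hy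
          exact PP_dec (by decide) (by decide) (by decide)
        have c4 : List.Chain' PP ([[1]] ++ (Tl k).map (fun a => 1 :: a) ++ [[2],[3]]
            ++ (Tl k).map (fun a => 3 :: a) ++ [[4]]) := by
          refine c3.append (List.isChain_singleton _) ?_
          intro x hx y hy
          rw [List.getLast?_append, List.getLast?_map, hL] at hx
          simp at hx hy
          subst hx; subst hy
          exact PP_dec (by decide) (by decide) (by decide)
        exact c4
    · exact Or.inr ⟨(Tl k).map (fun a => 1 :: a) ++ [[2],[3]]
        ++ (Tl k).map (fun a => 3 :: a), by simp [Tl]⟩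

/-- For `u ∈ S^d` with `u ≠ (4)`, the successor `s(u)` satisfies
`|l(u) - l(s(u))| ≤ 1`. -/
theorem stmt5 (d : ℕ) (u v : List ℕ) (hu : u ∈ Tl d) (hne : u ≠ [4])
    (hs : IsSucc d u v) :
    u.length ≤ v.length + 1 ∧ v.length ≤ u.length + 1 := by
  obtain ⟨hch, hrep⟩ := Tl_key d
  haveI htrans : IsTrans (List ℕ) lexLt := ⟨fun a b c h1 h2 => (List.lt_iff_lex_lt _ _).mp (lt_trans (α := List ℕ) ((List.lt_iff_lex_lt _ _).mpr h1) ((List.lt_iff_lex_lt _ _).mpr h2))⟩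
  have hasym : IsAsymm (List ℕ) lexLt := ⟨fun a b => Std.Asymm.asymm (r := List.Lex (fun x y : ℕ => x < y)) a b⟩
  have hlt : List.Chain' lexLt (Tl d) := hch.imp fun a b h => h.1
  have hpw : List.Pairwise lexLt (Tl d) := List.isChain_iff_pairwise.mp hlt
  obtain ⟨i, hi⟩ := List.mem_iff_get.mp hu
  rcases hrep with h0 | ⟨m, hm⟩
  · rw [h0] at hu; exact absurd hu List.not_mem_nil
  have hL : (Tl d).getLast? = some [4] := by
    rw [hm, show ([1] :: m) ++ [[4]] = ([1] :: m) ++ [[4]] from rfl, List.getLast?_concat]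
  have hlen : (i : ℕ) + 1 < (Tl d).length := by
    rcases Nat.lt_or_ge ((i : ℕ) + 1) (Tl d).length with h | h
    · exact h
    · exfalso
      have hgi : (Tl d)[(i : ℕ)]? = some u := by rw [List.getElem?_eq_getElem i.2, ← hi]; rfl
      have hi' : (i : ℕ) = (Tl d).length - 1 := by have := i.2; omega
      rw [List.getLast?_eq_getElem?, ← hi', hgi] at hL
      exact hne (Option.some_injective _ hL)
  set j : Fin (Tl d).length := ⟨(i : ℕ) + 1, hlen⟩ with hj
  set w := (Tl d).get j with hw
  have hPP : PP u w := by
    have h := List.isChain_iff_getElem.mp hch (i : ℕ) (by omega)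
    have hi2 : (Tl d)[(i : ℕ)] = u := hi
    rw [hi2] at h
    exact h
  have hwmem : w ∈ Tl d := List.get_mem _ _
  obtain ⟨hv, huv, hmin⟩ := hs
  have mono : ∀ a b : Fin (Tl d).length,
      lexLt ((Tl d).get a) ((Tl d).get b) → a < b := by
    intro a b hab
    by_contra hba
    push_neg at hba
    rcases eq_or_lt_of_le hba with rfl | hba'
    · exact hasym.asymm _ _ hab hab
    · exact hasym.asymm _ _ (List.pairwise_iff_get.mp hpw b a hba') hab
  rcases hmin w hwmem hPP.1 with rfl | hvw
  · exact hPP.2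
  · exfalso
    obtain ⟨jv, hjv⟩ := List.mem_iff_get.mp hv
    have h1 : i < jv := mono i jv (by rw [hi, hjv]; exact huv)
    have h2 : jv < j := mono jv j (by rw [hjv, ← hw]; exact hvw)
    rw [hj] at h2
    have h2' : (jv : ℕ) < (i : ℕ) + 1 := h2
    have h1' : (i : ℕ) < (jv : ℕ) := h1
    omega
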